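/- Let L be the n×n lower triangular matrix with [L]_{ij} = 1 if i ≥ j and 0 otherwise. Let D_c, D_μ, D_b be diagonal n×n matrices with diagonal entries c_i, μ_i, b_i respectively, where c_i ≠ 0 for all i, and suppose |μ_i − b_j| ≤ d for all i ≥ j, where d ≥ 0. Let N be the 2n×2n block matrix N = [[L·D_c, D_μ·L − L·D_b], [0, L]]. Then N is invertible, N^{-1} = [[D_c^{-1}L^{-1}, −D_c^{-1}L^{-1}(D_μ·L − L·D_b)L^{-1}], [0, L^{-1}]], and the ℓ²-operator norm satisfies ‖N^{-1}‖² ≤ 4·(1 + (1 + 4·d²·n²)/c_min²), where c_min = min_{1 ≤ i ≤ n} |c_i|. -/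

import Mathlib

open Matrix
open scoped Matrix.Norms.L2Operator



private lemma norm_euc {m : Type*} [Fintype m] (u : m → ℝ) :
    ‖(WithLp.equiv 2 (m → ℝ)).symm u‖ = Real.sqrt (∑ i, u i ^ 2) := by
  rw [EuclideanSpace.norm_eq]
  congr 1
  refine Finset.sum_congr rfl fun i _ => ?_
  simp [Real.norm_eq_abs, sq_abs]

private lemma normsq_euc {m : Type*} [Fintype m] (u : m → ℝ) :
    ‖(WithLp.equiv 2 (m → ℝ)).symm u‖ ^ 2 = ∑ i, u i ^ 2 := by
  rw [norm_euc, Real.sq_sqrt (by positivity)]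

private lemma mulVec_sqrt_le {m n : Type*} [Fintype m] [Fintype n] [DecidableEq n]
    (A : Matrix m n ℝ) (x : n → ℝ) :
    Real.sqrt (∑ i, (A.mulVec x) i ^ 2) ≤ ‖A‖ * Real.sqrt (∑ j, x j ^ 2) := by
  have h := Matrix.l2_opNorm_mulVec A ((WithLp.equiv 2 (n → ℝ)).symm x)
  have e1 : ((EuclideanSpace.equiv m ℝ).symm (A.mulVec ((WithLp.equiv 2 (n → ℝ)).symm x))
      : EuclideanSpace ℝ m) = (WithLp.equiv 2 (m → ℝ)).symm (A.mulVec x) := rfl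
  rw [e1, norm_euc, norm_euc] at h
  exact h

private lemma mulVec_sumsq_le {m n : Type*} [Fintype m] [Fintype n] [DecidableEq n]
    (A : Matrix m n ℝ) (x : n → ℝ) :
    ∑ i, (A.mulVec x) i ^ 2 ≤ ‖A‖ ^ 2 * ∑ j, x j ^ 2 := by
  have h := mulVec_sqrt_le A x
  have h2 : Real.sqrt (∑ i, (A.mulVec x) i ^ 2) ^ 2
      ≤ (‖A‖ * Real.sqrt (∑ j, x j ^ 2)) ^ 2 :=
    pow_le_pow_left₀ (Real.sqrt_nonneg _) h 2
  rw [Real.sq_sqrt (by positivity), mul_pow, Real.sq_sqrt (by positivity)] at h2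
  exact h2

set_option maxHeartbeats 1000000 in
private lemma opNorm_le_of_sumsq {m n : Type*} [Fintype m] [Fintype n] [DecidableEq n]
    (A : Matrix m n ℝ) {r : ℝ} (hr : 0 ≤ r)
    (h : ∀ x : n → ℝ, ∑ i, (A.mulVec x) i ^ 2 ≤ r ^ 2 * ∑ j, x j ^ 2) : ‖A‖ ≤ r := by
  rw [Matrix.l2_opNorm_def]
  refine ContinuousLinearMap.opNorm_le_bound _ hr fun x => ?_
  have happ : ((Matrix.toEuclideanLin ≪≫ₗ LinearMap.toContinuousLinearMap) A) x
      = (WithLp.equiv 2 (m → ℝ)).symm (A.mulVec ((WithLp.equiv 2 (n → ℝ)) x)) := by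
    simp [Matrix.toEuclideanLin_apply]
  rw [happ]
  set y : n → ℝ := (WithLp.equiv 2 (n → ℝ)) x with hy
  have hxn : ‖x‖ = Real.sqrt (∑ j, y j ^ 2) := by
    have : x = (WithLp.equiv 2 (n → ℝ)).symm y := rfl
    rw [this, norm_euc]
  rw [norm_euc, hxn]
  calc Real.sqrt (∑ i, (A.mulVec y) i ^ 2) ≤ Real.sqrt (r ^ 2 * ∑ j, y j ^ 2) :=
        Real.sqrt_le_sqrt (h y)
    _ = r * Real.sqrt (∑ j, y j ^ 2) := by
        rw [Real.sqrt_mul (by positivity), Real.sqrt_sq hr]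


private lemma part_bound {κ n₁ n₂ : Type*} [Fintype κ] [Fintype n₁] [Fintype n₂]
    [DecidableEq n₁] [DecidableEq n₂]
    (M₁ : Matrix κ n₁ ℝ) (M₂ : Matrix κ n₂ ℝ) (x₁ : n₁ → ℝ) (x₂ : n₂ → ℝ) :
    ∑ i, ((M₁.mulVec x₁) i + (M₂.mulVec x₂) i) ^ 2
      ≤ (‖M₁‖ * Real.sqrt (∑ j, x₁ j ^ 2) + ‖M₂‖ * Real.sqrt (∑ j, x₂ j ^ 2)) ^ 2 := by
  have h1 : ∑ i, ((M₁.mulVec x₁) i + (M₂.mulVec x₂) i) ^ 2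
      = ‖(WithLp.equiv 2 (κ → ℝ)).symm (M₁.mulVec x₁)
        + (WithLp.equiv 2 (κ → ℝ)).symm (M₂.mulVec x₂)‖ ^ 2 := by
    have e : ((WithLp.equiv 2 (κ → ℝ)).symm (M₁.mulVec x₁)
        + (WithLp.equiv 2 (κ → ℝ)).symm (M₂.mulVec x₂))
        = (WithLp.equiv 2 (κ → ℝ)).symm (fun i => (M₁.mulVec x₁) i + (M₂.mulVec x₂) i) := rfl
    rw [e, normsq_euc]
  rw [h1]
  have htri : ‖(WithLp.equiv 2 (κ → ℝ)).symm (M₁.mulVec x₁)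
      + (WithLp.equiv 2 (κ → ℝ)).symm (M₂.mulVec x₂)‖
      ≤ ‖M₁‖ * Real.sqrt (∑ j, x₁ j ^ 2) + ‖M₂‖ * Real.sqrt (∑ j, x₂ j ^ 2) := by
    refine (norm_add_le _ _).trans (add_le_add ?_ ?_)
    · rw [norm_euc]; exact mulVec_sqrt_le M₁ x₁
    · rw [norm_euc]; exact mulVec_sqrt_le M₂ x₂
  exact pow_le_pow_left₀ (norm_nonneg _) htri 2

private lemma blocks_normsq_le {m₁ m₂ n₁ n₂ : Type*} [Fintype m₁] [Fintype m₂]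
    [Fintype n₁] [Fintype n₂] [DecidableEq n₁] [DecidableEq n₂]
    (A : Matrix m₁ n₁ ℝ) (B : Matrix m₁ n₂ ℝ) (C : Matrix m₂ n₁ ℝ) (D : Matrix m₂ n₂ ℝ) :
    ‖Matrix.fromBlocks A B C D‖ ^ 2 ≤ ‖A‖ ^ 2 + ‖B‖ ^ 2 + ‖C‖ ^ 2 + ‖D‖ ^ 2 := by
  have hT0 : (0:ℝ) ≤ ‖A‖ ^ 2 + ‖B‖ ^ 2 + ‖C‖ ^ 2 + ‖D‖ ^ 2 := by positivity
  have key : ‖Matrix.fromBlocks A B C D‖ ≤ Real.sqrt (‖A‖ ^ 2 + ‖B‖ ^ 2 + ‖C‖ ^ 2 + ‖D‖ ^ 2) := by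
    refine opNorm_le_of_sumsq _ (Real.sqrt_nonneg _) fun x => ?_
    rw [Real.sq_sqrt hT0]
    set x₁ : n₁ → ℝ := x ∘ Sum.inl with hx₁
    set x₂ : n₂ → ℝ := x ∘ Sum.inr with hx₂
    have hmv := Matrix.fromBlocks_mulVec A B C D x
    have e1 : ∀ i, ((Matrix.fromBlocks A B C D).mulVec x) (Sum.inl i)
        = (A.mulVec x₁) i + (B.mulVec x₂) i := by intro i; rw [hmv]; rfl
    have e2 : ∀ i, ((Matrix.fromBlocks A B C D).mulVec x) (Sum.inr i)
        = (C.mulVec x₁) i + (D.mulVec x₂) i := by intro i; rw [hmv]; rfl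
    rw [Fintype.sum_sum_type]
    simp only [e1, e2]
    set p := Real.sqrt (∑ j, x₁ j ^ 2) with hp
    set q := Real.sqrt (∑ j, x₂ j ^ 2) with hq
    have hp0 : 0 ≤ p := Real.sqrt_nonneg _
    have hq0 : 0 ≤ q := Real.sqrt_nonneg _
    have hps : p ^ 2 = ∑ j, x₁ j ^ 2 := Real.sq_sqrt (by positivity)
    have hqs : q ^ 2 = ∑ j, x₂ j ^ 2 := Real.sq_sqrt (by positivity)
    have hsum : ∑ j, x j ^ 2 = p ^ 2 + q ^ 2 := by
      rw [hps, hqs, Fintype.sum_sum_type]; rfl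
    have p1 := part_bound A B x₁ x₂
    have p2 := part_bound C D x₁ x₂
    rw [← hp, ← hq] at p1 p2
    have final : (‖A‖ * p + ‖B‖ * q) ^ 2 + (‖C‖ * p + ‖D‖ * q) ^ 2
        ≤ (‖A‖ ^ 2 + ‖B‖ ^ 2 + ‖C‖ ^ 2 + ‖D‖ ^ 2) * (p ^ 2 + q ^ 2) := by
      nlinarith [sq_nonneg (‖A‖ * q - ‖B‖ * p), sq_nonneg (‖C‖ * q - ‖D‖ * p)]
    rw [hsum]
    linarith
  calc ‖Matrix.fromBlocks A B C D‖ ^ 2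
      ≤ Real.sqrt (‖A‖ ^ 2 + ‖B‖ ^ 2 + ‖C‖ ^ 2 + ‖D‖ ^ 2) ^ 2 :=
        pow_le_pow_left₀ (norm_nonneg _) key 2
    _ = _ := Real.sq_sqrt hT0

private lemma sum_ite_nat_eq (n m : ℕ) (g : Fin n → ℝ) :
    ∑ j : Fin n, (if (j : ℕ) = m then g j else 0) = if h : m < n then g ⟨m, h⟩ else 0 := by
  split_ifs with h
  · rw [Finset.sum_eq_single (⟨m, h⟩ : Fin n)]
    · simp
    · intro j _ hj
      exact if_neg fun hc => hj (Fin.ext hc)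
    · intro hj; exact absurd (Finset.mem_univ _) hj
  · exact Finset.sum_eq_zero fun j _ => if_neg fun hc => h (by omega)

private lemma sum_shift {n : ℕ} (i : Fin n) (g : Fin n → ℝ) :
    ∑ j : Fin n, (if (i : ℕ) = (j : ℕ) + 1 then g j else 0)
      = if _ : 0 < (i : ℕ) then g ⟨(i : ℕ) - 1, Nat.lt_of_le_of_lt (Nat.sub_le _ _) i.isLt⟩
        else 0 := by
  rcases Nat.eq_zero_or_pos (i : ℕ) with h0 | h0
  · rw [dif_neg (by omega)]
    exact Finset.sum_eq_zero fun j _ => if_neg (by omega)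
  · rw [dif_pos h0]
    have key := sum_ite_nat_eq n ((i : ℕ) - 1) g
    rw [dif_pos (Nat.lt_of_le_of_lt (Nat.sub_le _ _) i.isLt)] at key
    rw [← key]
    exact Finset.sum_congr rfl fun j _ => if_congr (by omega) rfl rfl
set_option maxHeartbeats 1600000 in
/-- the block matrix `N = [[L·D_c, D_μ·L − L·D_b], [0, L]]` is
invertible, with explicit block inverse, and the squared ℓ²-operator norm of
its inverse is bounded by `4·(1 + (1 + 4·d²·n²)/c_min²)`. -/
theorem N_invertible_and_l2_opNorm_sq_inv_le
    (n : ℕ) (d : ℝ) (hd : 0 ≤ d)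
    (c μ b : Fin n → ℝ) (hc : ∀ i, c i ≠ 0) (cmin : ℝ)
    (hcmin : IsLeast (Set.range fun i => |c i|) cmin)
    (hμb : ∀ i j : Fin n, j ≤ i → |μ i - b j| ≤ d)
    (L : Matrix (Fin n) (Fin n) ℝ)
    (hL : ∀ i j, L i j = if j ≤ i then 1 else 0)
    (N : Matrix (Fin n ⊕ Fin n) (Fin n ⊕ Fin n) ℝ)
    (hN : N = Matrix.fromBlocks
      (L * Matrix.diagonal c)
      (Matrix.diagonal μ * L - L * Matrix.diagonal b)
      0 L) :
    IsUnit N ∧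
    N⁻¹ = Matrix.fromBlocks
      ((Matrix.diagonal c)⁻¹ * L⁻¹)
      (-((Matrix.diagonal c)⁻¹ * L⁻¹ * (Matrix.diagonal μ * L - L * Matrix.diagonal b) * L⁻¹))
      0 L⁻¹ ∧
    ‖N⁻¹‖ ^ 2 ≤ 4 * (1 + (1 + 4 * d ^ 2 * n ^ 2) / cmin ^ 2) := by
  obtain ⟨i₀, hi₀⟩ := hcmin.1
  have hcmin_pos : 0 < cmin := hi₀ ▸ abs_pos.mpr (hc i₀)
  set S : Matrix (Fin n) (Fin n) ℝ :=
    Matrix.of (fun i j => if (i : ℕ) = (j : ℕ) + 1 then (1:ℝ) else 0) with hS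
  set K : Matrix (Fin n) (Fin n) ℝ := 1 - S with hKdef
  set X : Matrix (Fin n) (Fin n) ℝ :=
    Matrix.diagonal μ * L - L * Matrix.diagonal b with hX
  -- S * L computed entrywise
  have hSL : ∀ i k, (S * L) i k = if (k : ℕ) < (i : ℕ) then (1:ℝ) else 0 := by
    intro i k
    rw [Matrix.mul_apply]
    have e : ∀ j, S i j * L j k = if (i : ℕ) = (j : ℕ) + 1 then L j k else 0 := by
      intro j
      show (if (i : ℕ) = (j : ℕ) + 1 then (1:ℝ) else 0) * L j k = _
      split_ifs <;> simp
    simp only [e]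
    rw [sum_shift i (fun j => L j k)]
    rcases Nat.eq_zero_or_pos (i : ℕ) with h0 | h0
    · rw [dif_neg (by omega), if_neg (by omega)]
    · rw [dif_pos h0, hL]
      simp only [Fin.le_def]
      split_ifs <;> first | rfl | omega
  -- K is a left inverse of L
  have hKL : K * L = 1 := by
    ext i k
    rw [hKdef, Matrix.sub_mul, Matrix.one_mul, Matrix.sub_apply, hSL, hL, Matrix.one_apply]
    simp only [Fin.le_def, Fin.ext_iff]
    split_ifs <;> (try norm_num) <;> omega
  have hLinv : L⁻¹ = K := Matrix.inv_eq_left_inv hKL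
  have hLK : L * K = 1 := mul_eq_one_comm.mpr hKL
  -- norm of S
  have hSmv : ∀ (x : Fin n → ℝ) (i : Fin n), (S.mulVec x) i
      = if _ : 0 < (i : ℕ) then x ⟨(i : ℕ) - 1, Nat.lt_of_le_of_lt (Nat.sub_le _ _) i.isLt⟩
        else 0 := by
    intro x i
    show ∑ j, S i j * x j = _
    have e : ∀ j, S i j * x j = if (i : ℕ) = (j : ℕ) + 1 then x j else 0 := by
      intro j
      show (if (i : ℕ) = (j : ℕ) + 1 then (1:ℝ) else 0) * x j = _
      split_ifs <;> simp
    simp only [e]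
    exact sum_shift i x
  have hS_norm : ‖S‖ ≤ 1 := by
    refine opNorm_le_of_sumsq S one_pos.le fun x => ?_
    rw [one_pow, one_mul]
    calc ∑ i, (S.mulVec x) i ^ 2
        = ∑ i : Fin n, ∑ j : Fin n, (if (i : ℕ) = (j : ℕ) + 1 then x j ^ 2 else 0) := by
          refine Finset.sum_congr rfl fun i _ => ?_
          rw [hSmv x i, sum_shift i (fun j => x j ^ 2)]
          split_ifs <;> simp
      _ = ∑ j : Fin n, ∑ i : Fin n, (if (i : ℕ) = (j : ℕ) + 1 then x j ^ 2 else 0) := Finset.sum_comm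
      _ ≤ ∑ j, x j ^ 2 := by
          refine Finset.sum_le_sum fun j _ => ?_
          rw [sum_ite_nat_eq n ((j : ℕ) + 1) (fun _ => x j ^ 2)]
          split_ifs
          · exact le_refl _
          · positivity
  have hone_norm : ‖(1 : Matrix (Fin n) (Fin n) ℝ)‖ ≤ 1 := by
    refine opNorm_le_of_sumsq _ one_pos.le fun x => ?_
    rw [Matrix.one_mulVec, one_pow, one_mul]
  have hK_norm : ‖K‖ ≤ 2 := by
    rw [hKdef]
    calc ‖(1 : Matrix (Fin n) (Fin n) ℝ) - S‖ ≤ ‖(1 : Matrix (Fin n) (Fin n) ℝ)‖ + ‖S‖ :=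
          norm_sub_le _ _
      _ ≤ 2 := by linarith
  -- norm of X
  have hXe : ∀ i j, X i j = (μ i - b j) * (if j ≤ i then 1 else 0) := by
    intro i j
    rw [hX, Matrix.sub_apply, Matrix.diagonal_mul, Matrix.mul_diagonal, hL]
    ring
  have hXsq : ∀ i j, X i j ^ 2 ≤ d ^ 2 := by
    intro i j
    rw [hXe]
    split_ifs with h
    · rw [mul_one]
      calc (μ i - b j) ^ 2 = |μ i - b j| ^ 2 := (sq_abs _).symm
        _ ≤ d ^ 2 := pow_le_pow_left₀ (abs_nonneg _) (hμb i j h) 2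
    · rw [mul_zero, zero_pow two_ne_zero]; positivity
  have hdn : (0:ℝ) ≤ d * n := mul_nonneg hd (Nat.cast_nonneg n)
  have hX_norm : ‖X‖ ≤ d * n := by
    refine opNorm_le_of_sumsq _ hdn fun x => ?_
    have hrow : ∀ i : Fin n, (X.mulVec x) i ^ 2 ≤ (∑ j, X i j ^ 2) * ∑ j, x j ^ 2 := by
      intro i
      show (∑ j, X i j * x j) ^ 2 ≤ _
      exact Finset.sum_mul_sq_le_sq_mul_sq _ _ _
    have hxx : (0:ℝ) ≤ ∑ j, x j ^ 2 := by positivity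
    have hconst : ∀ i : Fin n, ∑ j, X i j ^ 2 ≤ (n : ℝ) * d ^ 2 := by
      intro i
      calc ∑ j, X i j ^ 2 ≤ ∑ _j : Fin n, d ^ 2 :=
            Finset.sum_le_sum fun j _ => hXsq i j
        _ = (n : ℝ) * d ^ 2 := by
            rw [Finset.sum_const, Finset.card_univ, Fintype.card_fin, nsmul_eq_mul]
    calc ∑ i, (X.mulVec x) i ^ 2
        ≤ ∑ i, (∑ j, X i j ^ 2) * ∑ j, x j ^ 2 := Finset.sum_le_sum fun i _ => hrow i
      _ ≤ ∑ _i : Fin n, ((n : ℝ) * d ^ 2) * ∑ j, x j ^ 2 :=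
          Finset.sum_le_sum fun i _ => mul_le_mul_of_nonneg_right (hconst i) hxx
      _ = (d * n) ^ 2 * ∑ j, x j ^ 2 := by
          rw [Finset.sum_const, Finset.card_univ, Fintype.card_fin, nsmul_eq_mul]
          ring
  -- diagonal matrix facts
  have hdiag1 : Matrix.diagonal c * Matrix.diagonal (fun i => (c i)⁻¹) = 1 := by
    rw [Matrix.diagonal_mul_diagonal]
    have : (fun i => c i * (c i)⁻¹) = fun _ => (1:ℝ) :=
      funext fun i => mul_inv_cancel₀ (hc i)
    rw [this, Matrix.diagonal_one]
  have hDinv : (Matrix.diagonal c)⁻¹ = Matrix.diagonal (fun i => (c i)⁻¹) :=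
    Matrix.inv_eq_right_inv hdiag1
  have hcc : Matrix.diagonal c * (Matrix.diagonal c)⁻¹ = 1 := by rw [hDinv]; exact hdiag1
  have hDinv_norm : ‖(Matrix.diagonal c)⁻¹‖ ≤ cmin⁻¹ := by
    rw [hDinv]
    refine opNorm_le_of_sumsq _ (inv_nonneg.mpr hcmin_pos.le) fun x => ?_
    have hmv : ∀ i, ((Matrix.diagonal fun i => (c i)⁻¹).mulVec x) i = (c i)⁻¹ * x i :=
      fun i => Matrix.mulVec_diagonal _ _ _
    calc ∑ i, ((Matrix.diagonal fun i => (c i)⁻¹).mulVec x) i ^ 2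
        = ∑ i, ((c i)⁻¹) ^ 2 * x i ^ 2 := by
          refine Finset.sum_congr rfl fun i _ => ?_
          rw [hmv, mul_pow]
      _ ≤ ∑ i, (cmin⁻¹) ^ 2 * x i ^ 2 := by
          refine Finset.sum_le_sum fun i _ => ?_
          have h1 : |(c i)⁻¹| ≤ cmin⁻¹ := by
            rw [abs_inv]
            exact inv_anti₀ hcmin_pos (hcmin.2 ⟨i, rfl⟩)
          have h2 := pow_le_pow_left₀ (abs_nonneg _) h1 2
          rw [sq_abs] at h2
          nlinarith [sq_nonneg (x i)]
      _ = (cmin⁻¹) ^ 2 * ∑ i, x i ^ 2 := (Finset.mul_sum _ _ _).symm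
  set Dci : Matrix (Fin n) (Fin n) ℝ := (Matrix.diagonal c)⁻¹ with hDci
  -- block inverse
  have hTL : L * Matrix.diagonal c * (Dci * K) = 1 := by
    calc L * Matrix.diagonal c * (Dci * K)
        = L * (Matrix.diagonal c * (Dci * K)) := by rw [Matrix.mul_assoc]
      _ = L * (Matrix.diagonal c * Dci * K) := by rw [Matrix.mul_assoc]
      _ = 1 := by rw [hcc, Matrix.one_mul, hLK]
  have hNM : N * Matrix.fromBlocks (Dci * K) (-(Dci * K * X * K)) 0 K = 1 := by
    rw [hN, Matrix.fromBlocks_multiply]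
    have e1 : L * Matrix.diagonal c * (Dci * K) + X * 0 = 1 := by
      rw [Matrix.mul_zero, add_zero]; exact hTL
    have e2 : L * Matrix.diagonal c * -(Dci * K * X * K) + X * K = 0 := by
      have h1 : L * Matrix.diagonal c * (Dci * K * X * K) = X * K := by
        calc L * Matrix.diagonal c * (Dci * K * X * K)
            = L * Matrix.diagonal c * (Dci * K) * (X * K) := by
              simp only [Matrix.mul_assoc]
          _ = X * K := by rw [hTL, Matrix.one_mul]
      rw [Matrix.mul_neg, h1, neg_add_cancel]
    have e3 : (0 : Matrix (Fin n) (Fin n) ℝ) * (Dci * K) + L * 0 = 0 := by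
      rw [Matrix.zero_mul, Matrix.mul_zero, add_zero]
    have e4 : (0 : Matrix (Fin n) (Fin n) ℝ) * -(Dci * K * X * K) + L * K = 1 := by
      rw [Matrix.zero_mul, zero_add, hLK]
    rw [e1, e2, e3, e4, Matrix.fromBlocks_one]
  have hunit : IsUnit N := by
    have h := congrArg Matrix.det hNM
    rw [Matrix.det_mul, Matrix.det_one] at h
    exact (Matrix.isUnit_iff_isUnit_det N).mpr (IsUnit.of_mul_eq_one _ h)
  have hNinv : N⁻¹ = Matrix.fromBlocks (Dci * K) (-(Dci * K * X * K)) 0 K :=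
    Matrix.inv_eq_right_inv hNM
  refine ⟨hunit, ?_, ?_⟩
  · rw [hLinv]; exact hNinv
  · -- norm bound
    have htinv : (0:ℝ) ≤ cmin⁻¹ := inv_nonneg.mpr hcmin_pos.le
    have hA_norm : ‖Dci * K‖ ≤ cmin⁻¹ * 2 :=
      le_trans (Matrix.l2_opNorm_mul _ _)
        (mul_le_mul hDinv_norm hK_norm (norm_nonneg _) htinv)
    have hB_norm : ‖Dci * K * X * K‖ ≤ cmin⁻¹ * 2 * (d * n) * 2 := by
      have h1 : ‖Dci * K * X‖ ≤ cmin⁻¹ * 2 * (d * n) :=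
        le_trans (Matrix.l2_opNorm_mul _ _)
          (mul_le_mul hA_norm hX_norm (norm_nonneg _) (by linarith))
      exact le_trans (Matrix.l2_opNorm_mul _ _)
        (mul_le_mul h1 hK_norm (norm_nonneg _) (by nlinarith))
    have hblocks := blocks_normsq_le (Dci * K) (-(Dci * K * X * K))
      (0 : Matrix (Fin n) (Fin n) ℝ) K
    rw [hNinv]
    have hA2 : ‖Dci * K‖ ^ 2 ≤ (cmin⁻¹ * 2) ^ 2 :=
      pow_le_pow_left₀ (norm_nonneg _) hA_norm 2
    have hB2 : ‖-(Dci * K * X * K)‖ ^ 2 ≤ (cmin⁻¹ * 2 * (d * n) * 2) ^ 2 := by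
      rw [norm_neg]
      exact pow_le_pow_left₀ (norm_nonneg _) hB_norm 2
    have hK2 : ‖K‖ ^ 2 ≤ 4 := by nlinarith [norm_nonneg K]
    have hz : ‖(0 : Matrix (Fin n) (Fin n) ℝ)‖ ^ 2 = 0 := by rw [norm_zero]; ring
    have hrhs : 4 * (1 + (1 + 4 * d ^ 2 * (n:ℝ) ^ 2) / cmin ^ 2)
        = 4 + 4 * cmin⁻¹ ^ 2 + 16 * (d ^ 2 * (n:ℝ) ^ 2 * cmin⁻¹ ^ 2) := by
      rw [div_eq_mul_inv, inv_pow]; ring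
    have hA2' : ‖Dci * K‖ ^ 2 ≤ 4 * cmin⁻¹ ^ 2 := by
      calc ‖Dci * K‖ ^ 2 ≤ (cmin⁻¹ * 2) ^ 2 := hA2
        _ = 4 * cmin⁻¹ ^ 2 := by ring
    have hB2' : ‖-(Dci * K * X * K)‖ ^ 2 ≤ 16 * (d ^ 2 * (n:ℝ) ^ 2 * cmin⁻¹ ^ 2) := by
      calc ‖-(Dci * K * X * K)‖ ^ 2 ≤ (cmin⁻¹ * 2 * (d * n) * 2) ^ 2 := hB2
        _ = 16 * (d ^ 2 * (n:ℝ) ^ 2 * cmin⁻¹ ^ 2) := by ring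
    rw [hrhs]
    linarith [hblocks, hA2', hB2', hK2, hz]
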